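/- Let L = p^{-1}Z_p ⊕ Z_p ⊕ Z_p ⊕ Z_p ⊆ Q_p⁴ with the standard symplectic pairing. Call a primitive element x ∈ L (i.e. x ∉ pL) type (I) if ⟨x,y⟩ ∈ p^{-1}Z_p ∖ Z_p for some y ∈ L, and type (II) if ⟨x,y⟩ ∈ Z_p for all y ∈ L. If x ∈ L is primitive of type (I) and y ∈ L satisfies ⟨x,y⟩ ∈ Z_p, then there exists λ ∈ Z_p such that y − λx is not primitive of type (I). -/

import Mathlib

/-- The paramodular lattice `L = p⁻¹ℤ_p ⊕ ℤ_p ⊕ ℤ_p ⊕ ℤ_p ⊆ ℚ_p⁴` is identified with `ℤ_p⁴`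
via `(a,b,c,d) ↦ (p⁻¹a, b, c, d)`.  Under this identification the standard symplectic pairing
`⟨x,y⟩ = x₁y₄ + x₂y₃ − x₃y₂ − x₄y₁` becomes the following `ℚ_p`-valued pairing on `ℤ_p⁴`. -/
noncomputable def spPara (p : ℕ) [Fact p.Prime] (u v : Fin 4 → ℤ_[p]) : ℚ_[p] :=
  ((u 0 * v 3 : ℤ_[p]) : ℚ_[p]) / (p : ℚ_[p]) + ((u 1 * v 2 : ℤ_[p]) : ℚ_[p])
    - ((u 2 * v 1 : ℤ_[p]) : ℚ_[p]) - ((u 3 * v 0 : ℤ_[p]) : ℚ_[p]) / (p : ℚ_[p])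

/-- `x ∈ L` is primitive if `x ∉ pL`. -/
def ParaPrimitive (p : ℕ) [Fact p.Prime] (x : Fin 4 → ℤ_[p]) : Prop :=
  ¬ ∀ i, (p : ℤ_[p]) ∣ x i

/-- A primitive element of type (I): `⟨x,y⟩ ∈ p⁻¹ℤ_p ∖ ℤ_p` for some `y ∈ L`. -/
def PrimTypeI (p : ℕ) [Fact p.Prime] (x : Fin 4 → ℤ_[p]) : Prop :=
  ParaPrimitive p x ∧ ∃ y : Fin 4 → ℤ_[p], ¬ ‖spPara p x y‖ ≤ 1

/-- A primitive element of type (II): `⟨x,y⟩ ∈ ℤ_p` for every `y ∈ L`. -/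
def PrimTypeII (p : ℕ) [Fact p.Prime] (x : Fin 4 → ℤ_[p]) : Prop :=
  ParaPrimitive p x ∧ ∀ y : Fin 4 → ℤ_[p], ‖spPara p x y‖ ≤ 1

lemma spPara_int (p : ℕ) [Fact p.Prime] (w z : Fin 4 → ℤ_[p])
    (h0 : (p : ℤ_[p]) ∣ w 0) (h3 : (p : ℤ_[p]) ∣ w 3) : ‖spPara p w z‖ ≤ 1 := by
  obtain ⟨c, hc⟩ := h0
  obtain ⟨d, hd⟩ := h3
  have hp : (p : ℚ_[p]) ≠ 0 := Nat.cast_ne_zero.mpr (Fact.out : p.Prime).ne_zero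
  have : spPara p w z = ((c * z 3 + w 1 * z 2 - w 2 * z 1 - d * z 0 : ℤ_[p]) : ℚ_[p]) := by
    simp only [spPara, hc, hd]
    push_cast
    field_simp
  rw [this, ← PadicInt.norm_def]
  exact PadicInt.norm_le_one _

lemma unit_cancel (p : ℕ) [Fact p.Prime] (u : ℤ_[p]ˣ) (w : ℤ_[p])
    (h : (p : ℤ_[p]) ∣ (↑u * w)) : (p : ℤ_[p]) ∣ w := by
  have h2 := h.mul_left (↑u⁻¹ : ℤ_[p])
  rwa [← mul_assoc, Units.inv_mul, one_mul] at h2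

/-- If `x ∈ L` is primitive of type (I) and `y ∈ L` satisfies `⟨x,y⟩ ∈ ℤ_p`, then there
exists `λ ∈ ℤ_p` such that `y − λx` is not primitive of type (I). -/
theorem typeI_pairing_integral_reduction
    (p : ℕ) [Fact p.Prime] (x y : Fin 4 → ℤ_[p])
    (hx : PrimTypeI p x) (hxy : ‖spPara p x y‖ ≤ 1) :
    ∃ lam : ℤ_[p], ¬ PrimTypeI p (y - lam • x) := by
  have hp : (p : ℚ_[p]) ≠ 0 := Nat.cast_ne_zero.mpr (Fact.out : p.Prime).ne_zero
  have hpn : ‖(p : ℚ_[p])‖ < 1 := by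
    rw [Padic.norm_p]
    exact inv_lt_one_of_one_lt₀ (by exact_mod_cast (Fact.out : p.Prime).one_lt)
  have hdvd : (p : ℤ_[p]) ∣ (x 0 * y 3 - x 3 * y 0) := by
    rw [← PadicInt.norm_lt_one_iff_dvd]
    have key : ((x 0 * y 3 - x 3 * y 0 : ℤ_[p]) : ℚ_[p])
        = (spPara p x y - (((x 1 * y 2 - x 2 * y 1 : ℤ_[p])) : ℚ_[p])) * (p : ℚ_[p]) := by
      simp only [spPara]
      push_cast
      field_simp
      ring
    rw [PadicInt.norm_def, key, norm_mul]
    calc ‖spPara p x y - ((x 1 * y 2 - x 2 * y 1 : ℤ_[p]) : ℚ_[p])‖ * ‖(p : ℚ_[p])‖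
        ≤ 1 * ‖(p : ℚ_[p])‖ := by
          apply mul_le_mul_of_nonneg_right _ (norm_nonneg _)
          rw [sub_eq_add_neg]
          refine le_trans (Padic.nonarchimedean _ _) (max_le hxy ?_)
          rw [norm_neg, ← PadicInt.norm_def]
          exact PadicInt.norm_le_one _
      _ < 1 := by simpa using hpn
  have hux : ¬ ((p : ℤ_[p]) ∣ x 0) ∨ ¬ ((p : ℤ_[p]) ∣ x 3) := by
    by_contra h
    push_neg at h
    obtain ⟨z, hz⟩ := hx.2
    exact hz (spPara_int p x z h.1 h.2)
  have hunit : ∀ a : ℤ_[p], ¬ ((p : ℤ_[p]) ∣ a) → IsUnit a := by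
    intro a ha
    rw [PadicInt.isUnit_iff]
    rcases lt_or_eq_of_le (PadicInt.norm_le_one a) with h | h
    · exact absurd ((PadicInt.norm_lt_one_iff_dvd a).mp h) ha
    · exact h
  rcases hux with h0 | h3
  · obtain ⟨u, hu⟩ := hunit _ h0
    have hab : (↑u : ℤ_[p]) * ↑u⁻¹ = 1 := u.mul_inv
    refine ⟨(↑u⁻¹ : ℤ_[p]) * y 0, fun hPI => ?_⟩
    obtain ⟨z, hz⟩ := hPI.2
    apply hz
    apply spPara_int
    · show (p : ℤ_[p]) ∣ (y 0 - (↑u⁻¹ * y 0) * x 0)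
      have : y 0 - (↑u⁻¹ * y 0) * x 0 = 0 := by
        rw [← hu]; linear_combination (-(y 0)) * hab
      simp [this]
    · show (p : ℤ_[p]) ∣ (y 3 - (↑u⁻¹ * y 0) * x 3)
      apply unit_cancel p u
      have hm : (↑u : ℤ_[p]) * (y 3 - (↑u⁻¹ * y 0) * x 3) = x 0 * y 3 - x 3 * y 0 := by
        rw [← hu]; linear_combination (-(y 0 * x 3)) * hab
      rwa [hm]
  · obtain ⟨u, hu⟩ := hunit _ h3
    have hab : (↑u : ℤ_[p]) * ↑u⁻¹ = 1 := u.mul_inv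
    refine ⟨(↑u⁻¹ : ℤ_[p]) * y 3, fun hPI => ?_⟩
    obtain ⟨z, hz⟩ := hPI.2
    apply hz
    apply spPara_int
    · show (p : ℤ_[p]) ∣ (y 0 - (↑u⁻¹ * y 3) * x 0)
      apply unit_cancel p u
      have hm : (↑u : ℤ_[p]) * (y 0 - (↑u⁻¹ * y 3) * x 0) = -(x 0 * y 3 - x 3 * y 0) := by
        rw [← hu]; linear_combination (-(y 3 * x 0)) * hab
      rw [hm]
      exact hdvd.neg_right
    · show (p : ℤ_[p]) ∣ (y 3 - (↑u⁻¹ * y 3) * x 3)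
      have : y 3 - (↑u⁻¹ * y 3) * x 3 = 0 := by
        rw [← hu]; linear_combination (-(y 3)) * hab
      simp [this]
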